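/- (Bias–sensitivity tradeoff for ε-greedy) Suppose ‖v*_α - v̂‖_∞ = δ and π̂ is greedy w.r.t. v̂ in the original MDP. Then ‖v* - v^{π^α(π̂,π₀)}‖_∞ ≤ αL/(1-γ) + 2(1-α)γδ/(1-γ), where L = max_s (v*(s) - T^{π₀}v*(s)). -/
import Mathlib


open Finset

/-- One-step return for state `s`, action `a`, value `v`. -/
noncomputable def qOf {S A : Type*} [Fintype S] (γ : ℝ)
    (r : S → A → ℝ) (P : S → A → S → ℝ) (v : S → ℝ) (s : S) (a : A) : ℝ :=
  r s a + γ * ∑ s', P s a s' * v s'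

/-- Fixed-policy Bellman operator. -/
noncomputable def Tpol {S A : Type*} [Fintype S] [Fintype A] (γ : ℝ)
    (r : S → A → ℝ) (P : S → A → S → ℝ) (π : S → A → ℝ) (v : S → ℝ) : S → ℝ :=
  fun s => ∑ a, π s a * qOf γ r P v s a

/-- Optimal Bellman operator. -/
noncomputable def Topt {S A : Type*} [Fintype S] [Fintype A] (γ : ℝ)
    (r : S → A → ℝ) (P : S → A → S → ℝ) (v : S → ℝ) : S → ℝ :=
  fun s => ⨆ a : A, qOf γ r P v s a
/-- Mixture policy `π^c(π₁,π₂) = (1-c)π₁ + c π₂`. -/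
noncomputable def mixPol {S A : Type*} (c : ℝ) (π1 π2 : S → A → ℝ) : S → A → ℝ :=
  fun s a => (1 - c) * π1 s a + c * π2 s a
section helpers

variable {S A : Type*} [Fintype S] [Fintype A] [Nonempty A]
variable (γ : ℝ) (r : S → A → ℝ) (P : S → A → S → ℝ)

lemma qOf_abs_sub (hγ0 : 0 ≤ γ)
    (hP : ∀ s a, (∀ s', 0 ≤ P s a s') ∧ ∑ s', P s a s' = 1)
    (v w : S → ℝ) (s : S) (a : A) :
    |qOf γ r P v s a - qOf γ r P w s a| ≤ γ * ‖v - w‖ := by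
  have h1 : qOf γ r P v s a - qOf γ r P w s a
      = γ * ∑ s', P s a s' * (v s' - w s') := by
    simp only [qOf, mul_sub, Finset.mul_sum]
    rw [Finset.sum_sub_distrib]
    ring
  rw [h1, abs_mul, abs_of_nonneg hγ0]
  apply mul_le_mul_of_nonneg_left _ hγ0
  calc |∑ s', P s a s' * (v s' - w s')| ≤ ∑ s', |P s a s' * (v s' - w s')| :=
        Finset.abs_sum_le_sum_abs _ _
    _ ≤ ∑ s', P s a s' * ‖v - w‖ := by
        apply Finset.sum_le_sum
        intro s' _
        rw [abs_mul, abs_of_nonneg ((hP s a).1 s')]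
        apply mul_le_mul_of_nonneg_left _ ((hP s a).1 s')
        have : |(v - w) s'| ≤ ‖v - w‖ := by
          have := norm_le_pi_norm (v - w) s'
          simpa [Real.norm_eq_abs] using this
        simpa using this
    _ = ‖v - w‖ := by rw [← Finset.sum_mul, (hP s a).2, one_mul]

lemma Tpol_abs_sub (hγ0 : 0 ≤ γ)
    (hP : ∀ s a, (∀ s', 0 ≤ P s a s') ∧ ∑ s', P s a s' = 1)
    (π : S → A → ℝ) (hπ : ∀ s, (∀ a, 0 ≤ π s a) ∧ ∑ a, π s a = 1)
    (v w : S → ℝ) (s : S) :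
    |Tpol γ r P π v s - Tpol γ r P π w s| ≤ γ * ‖v - w‖ := by
  have h1 : Tpol γ r P π v s - Tpol γ r P π w s
      = ∑ a, π s a * (qOf γ r P v s a - qOf γ r P w s a) := by
    simp only [Tpol, mul_sub]
    rw [← Finset.sum_sub_distrib]
  rw [h1]
  calc |∑ a, π s a * (qOf γ r P v s a - qOf γ r P w s a)|
      ≤ ∑ a, |π s a * (qOf γ r P v s a - qOf γ r P w s a)| :=
        Finset.abs_sum_le_sum_abs _ _
    _ ≤ ∑ a, π s a * (γ * ‖v - w‖) := by
        apply Finset.sum_le_sum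
        intro a _
        rw [abs_mul, abs_of_nonneg ((hπ s).1 a)]
        exact mul_le_mul_of_nonneg_left (qOf_abs_sub γ r P hγ0 hP v w s a) ((hπ s).1 a)
    _ = γ * ‖v - w‖ := by rw [← Finset.sum_mul, (hπ s).2, one_mul]

lemma Topt_abs_sub (hγ0 : 0 ≤ γ)
    (hP : ∀ s a, (∀ s', 0 ≤ P s a s') ∧ ∑ s', P s a s' = 1)
    (v w : S → ℝ) (s : S) :
    |Topt γ r P v s - Topt γ r P w s| ≤ γ * ‖v - w‖ := by
  have key : ∀ v w : S → ℝ, Topt γ r P v s - Topt γ r P w s ≤ γ * ‖v - w‖ := by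
    intro v w
    rw [sub_le_iff_le_add]
    apply ciSup_le
    intro a
    have h1 := (abs_le.mp (qOf_abs_sub γ r P hγ0 hP v w s a)).2
    have h2 : qOf γ r P w s a ≤ Topt γ r P w s :=
      le_ciSup (Set.Finite.bddAbove (Set.finite_range _)) a
    simp only [Topt] at h2 ⊢
    linarith
  have h1 := key v w
  have h2 := key w v
  rw [norm_sub_rev w v] at h2
  rw [abs_le]
  constructor <;> linarith

lemma Tpol_le_Topt (π : S → A → ℝ) (hπ : ∀ s, (∀ a, 0 ≤ π s a) ∧ ∑ a, π s a = 1)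
    (v : S → ℝ) (s : S) : Tpol γ r P π v s ≤ Topt γ r P v s := by
  calc Tpol γ r P π v s = ∑ a, π s a * qOf γ r P v s a := rfl
    _ ≤ ∑ a, π s a * Topt γ r P v s := by
        apply Finset.sum_le_sum
        intro a _
        exact mul_le_mul_of_nonneg_left
          (le_ciSup (Set.Finite.bddAbove (Set.finite_range _)) a) ((hπ s).1 a)
    _ = Topt γ r P v s := by rw [← Finset.sum_mul, (hπ s).2, one_mul]

end helpers

/-- Bias–sensitivity tradeoff for ε-greedy. If `‖v*_α - v̂‖ = δ`
and π̂ is greedy w.r.t. `v̂` in the original MDP, then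
`‖v* - v^{π^α(π̂,π₀)}‖ ≤ αL/(1-γ) + 2(1-α)γδ/(1-γ)` with
`L = max_s (v*(s) - T^{π₀}v*(s))`. -/
theorem bias_sensitivity_tradeoff
    {S A : Type*} [Fintype S] [Fintype A] [Nonempty S] [Nonempty A]
    (γ α δ : ℝ) (hγ0 : 0 ≤ γ) (hγ1 : γ < 1) (hα : α ∈ Set.Icc (0 : ℝ) 1)
    (r : S → A → ℝ) (P : S → A → S → ℝ) (π0 πhat : S → A → ℝ)
    (hP : ∀ s a, (∀ s', 0 ≤ P s a s') ∧ ∑ s', P s a s' = 1)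
    (hπ0 : ∀ s, (∀ a, 0 ≤ π0 s a) ∧ ∑ a, π0 s a = 1)
    (hπhat : ∀ s, (∀ a, 0 ≤ πhat s a) ∧ ∑ a, πhat s a = 1)
    (vstar vα vhat vmix : S → ℝ)
    (hstar : Topt γ r P vstar = vstar)
    (hvα : (fun s => (1 - α) * Topt γ r P vα s + α * Tpol γ r P π0 vα s) = vα)
    (hδ : ‖vα - vhat‖ = δ)
    (hgreedy : Tpol γ r P πhat vhat = Topt γ r P vhat)
    (hvmix : Tpol γ r P (mixPol α πhat π0) vmix = vmix)
    (L : ℝ) (hL : L = ⨆ s : S, (vstar s - Tpol γ r P π0 vstar s)) :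
    ‖vstar - vmix‖ ≤ α * L / (1 - γ) + 2 * (1 - α) * γ * δ / (1 - γ) := by
  obtain ⟨hα0, hα1⟩ := hα
  have hγ1' : (0:ℝ) < 1 - γ := by linarith
  have hδ0 : 0 ≤ δ := hδ ▸ norm_nonneg _
  set d1 := ‖vstar - vα‖ with hd1
  set d2 := ‖vα - vmix‖ with hd2
  have hd1_0 : 0 ≤ d1 := norm_nonneg _
  have hd2_0 : 0 ≤ d2 := norm_nonneg _
  -- L ≥ 0
  have hLbd : ∀ s : S, vstar s - Tpol γ r P π0 vstar s ≤ L := by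
    intro s
    rw [hL]
    exact le_ciSup (f := fun s => vstar s - Tpol γ r P π0 vstar s)
      (Set.Finite.bddAbove (Set.finite_range _)) s
  have hL0 : 0 ≤ L := by
    obtain ⟨s0⟩ := (inferInstance : Nonempty S)
    have h1 := hLbd s0
    have h2 : Tpol γ r P π0 vstar s0 ≤ Topt γ r P vstar s0 :=
      Tpol_le_Topt γ r P π0 hπ0 vstar s0
    have h3 : Topt γ r P vstar s0 = vstar s0 := congrFun hstar s0
    linarith
  -- Bias bound
  have hbias : d1 ≤ α * L / (1 - γ) := by
    have key : ∀ s, |vstar s - vα s| ≤ α * L + γ * d1 := by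
      intro s
      have e1 : Topt γ r P vstar s = vstar s := congrFun hstar s
      have e2 : (1 - α) * Topt γ r P vα s + α * Tpol γ r P π0 vα s = vα s :=
        congrFun hvα s
      have hq1 := abs_le.mp (Topt_abs_sub γ r P hγ0 hP vstar vα s)
      have hq2 := abs_le.mp (Tpol_abs_sub γ r P hγ0 hP π0 hπ0 vstar vα s)
      have hLs := hLbd s
      have hTT : Tpol γ r P π0 vstar s ≤ Topt γ r P vstar s :=
        Tpol_le_Topt γ r P π0 hπ0 vstar s
      have A1 : (1 - α) * (Topt γ r P vstar s - Topt γ r P vα s) ≤ (1 - α) * (γ * d1) :=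
        mul_le_mul_of_nonneg_left hq1.2 (by linarith)
      have A2 : (1 - α) * (-(γ * d1)) ≤ (1 - α) * (Topt γ r P vstar s - Topt γ r P vα s) :=
        mul_le_mul_of_nonneg_left hq1.1 (by linarith)
      have B1 : α * (Topt γ r P vstar s - Tpol γ r P π0 vα s) ≤ α * (L + γ * d1) := by
        apply mul_le_mul_of_nonneg_left _ hα0
        have := hq2.2
        linarith
      have B2 : α * (-(γ * d1)) ≤ α * (Topt γ r P vstar s - Tpol γ r P π0 vα s) := by
        apply mul_le_mul_of_nonneg_left _ hα0
        have := hq2.1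
        linarith
      have hαL : 0 ≤ α * L := mul_nonneg hα0 hL0
      rw [abs_le]
      constructor <;> linarith [A1, A2, B1, B2, e1, e2, hαL]
    have h1 : d1 ≤ α * L + γ * d1 := by
      rw [hd1]
      apply (pi_norm_le_iff_of_nonneg (by nlinarith [mul_nonneg hα0 hL0, mul_nonneg hγ0 hd1_0])).2
      intro s
      simpa [Real.norm_eq_abs] using key s
    rw [le_div_iff₀ hγ1']
    nlinarith
  -- Sensitivity bound
  have hsens : d2 ≤ 2 * (1 - α) * γ * δ / (1 - γ) := by
    have hsplit : ∀ s, Tpol γ r P (mixPol α πhat π0) vmix s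
        = (1 - α) * Tpol γ r P πhat vmix s + α * Tpol γ r P π0 vmix s := by
      intro s
      simp only [Tpol, mixPol, add_mul, Finset.sum_add_distrib, Finset.mul_sum, mul_assoc]
    have hvw : ‖vhat - vmix‖ ≤ δ + d2 := by
      have h1 : vhat - vmix = -(vα - vhat) + (vα - vmix) := by ring
      calc ‖vhat - vmix‖ = ‖-(vα - vhat) + (vα - vmix)‖ := by rw [h1]
        _ ≤ ‖-(vα - vhat)‖ + ‖vα - vmix‖ := norm_add_le _ _
        _ = δ + d2 := by rw [norm_neg, hδ]
    have key : ∀ s, |vα s - vmix s| ≤ 2 * (1 - α) * γ * δ + γ * d2 := by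
      intro s
      have e2 : (1 - α) * Topt γ r P vα s + α * Tpol γ r P π0 vα s = vα s :=
        congrFun hvα s
      have e3 : (1 - α) * Tpol γ r P πhat vmix s + α * Tpol γ r P π0 vmix s = vmix s := by
        rw [← hsplit]; exact congrFun hvmix s
      have hgre : Tpol γ r P πhat vhat s = Topt γ r P vhat s := congrFun hgreedy s
      have hq3 := abs_le.mp (Topt_abs_sub γ r P hγ0 hP vα vhat s)
      rw [hδ] at hq3
      have hq4 := abs_le.mp (Tpol_abs_sub γ r P hγ0 hP πhat hπhat vhat vmix s)
      have hq4' : |Tpol γ r P πhat vhat s - Tpol γ r P πhat vmix s| ≤ γ * (δ + d2) := by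
        rw [abs_le]
        have := mul_le_mul_of_nonneg_left hvw hγ0
        constructor <;> [linarith [hq4.1]; linarith [hq4.2]]
      have hq4'' := abs_le.mp hq4'
      have hq5 := abs_le.mp (Tpol_abs_sub γ r P hγ0 hP π0 hπ0 vα vmix s)
      -- Topt vα s - Tpol πhat vmix s ∈ [-(2γδ+γd2), 2γδ+γd2]
      have hC1 : Topt γ r P vα s - Tpol γ r P πhat vmix s ≤ γ * δ + γ * (δ + d2) := by
        have := hq3.2
        have := hq4''.2
        linarith [hgre]
      have hC2 : -(γ * δ) - γ * (δ + d2) ≤ Topt γ r P vα s - Tpol γ r P πhat vmix s := by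
        have := hq3.1
        have := hq4''.1
        linarith [hgre]
      have A1 : (1 - α) * (Topt γ r P vα s - Tpol γ r P πhat vmix s)
          ≤ (1 - α) * (γ * δ + γ * (δ + d2)) := mul_le_mul_of_nonneg_left hC1 (by linarith)
      have A2 : (1 - α) * (-(γ * δ) - γ * (δ + d2))
          ≤ (1 - α) * (Topt γ r P vα s - Tpol γ r P πhat vmix s) :=
        mul_le_mul_of_nonneg_left hC2 (by linarith)
      have B1 : α * (Tpol γ r P π0 vα s - Tpol γ r P π0 vmix s) ≤ α * (γ * d2) :=
        mul_le_mul_of_nonneg_left hq5.2 hα0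
      have B2 : α * (-(γ * d2)) ≤ α * (Tpol γ r P π0 vα s - Tpol γ r P π0 vmix s) :=
        mul_le_mul_of_nonneg_left hq5.1 hα0
      rw [abs_le]
      constructor <;> linarith [A1, A2, B1, B2, e2, e3]
    have h1 : d2 ≤ 2 * (1 - α) * γ * δ + γ * d2 := by
      rw [hd2]
      apply (pi_norm_le_iff_of_nonneg (by nlinarith [mul_nonneg (mul_nonneg (by linarith : (0:ℝ) ≤ 2*(1-α)) hγ0) hδ0, mul_nonneg hγ0 hd2_0])).2
      intro s
      simpa [Real.norm_eq_abs] using key s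
    rw [le_div_iff₀ hγ1']
    nlinarith
  -- combine
  have htri : ‖vstar - vmix‖ ≤ d1 + d2 := by
    have h1 : vstar - vmix = (vstar - vα) + (vα - vmix) := by ring
    rw [h1]
    exact norm_add_le _ _
  linarith
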